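/- Every graph in the class 𝔗 is a connected cactus graph with maximum degree at most 3 in which every cycle is a triangle and any two distinct triangles are vertex-disjoint. -/

import Mathlib

open SimpleGraph

variable {V : Type*}

noncomputable def colorDeg (G : SimpleGraph V) (c : Sym2 V → ℕ) (i : ℕ) (x : V) : ℕ :=
  {y | G.Adj x y ∧ c s(x, y) = i}.ncard

def IsLocIrrColoring (G : SimpleGraph V) (c : Sym2 V → ℕ) : Prop :=
  ∀ x y, G.Adj x y → colorDeg G c (c s(x, y)) x ≠ colorDeg G c (c s(x, y)) y

def IsLIEC (G : SimpleGraph V) (k : ℕ) (c : Sym2 V → ℕ) : Prop :=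
  (∀ e ∈ G.edgeSet, c e < k) ∧ IsLocIrrColoring G c

def IrrColorable (G : SimpleGraph V) : Prop := ∃ k c, IsLIEC G k c

noncomputable def irrChromIndex (G : SimpleGraph V) : ℕ :=
  sInf {k | ∃ c, IsLIEC G k c}

def IsCactus (G : SimpleGraph V) : Prop :=
  ∀ ⦃a b : V⦄ (p : G.Walk a a) (q : G.Walk b b), p.IsCycle → q.IsCycle →
    (∃ e, e ∈ p.edges ∧ e ∈ q.edges) → ∀ e, e ∈ p.edges ↔ e ∈ q.edges

noncomputable def numCycles (G : SimpleGraph V) : ℕ :=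
  {s : Set (Sym2 V) | ∃ (w : V) (p : G.Walk w w), p.IsCycle ∧ {e | e ∈ p.edges} = s}.ncard

/-- Attach a path of length `n` to the vertex `u` of `G`: the new vertices are
`Fin n`, and the path is `u, 0, 1, …, n-1`. -/
def attachPath {V : Type} (G : SimpleGraph V) (u : V) (n : ℕ) :
    SimpleGraph (V ⊕ Fin n) :=
  SimpleGraph.fromEdgeSet
    ((Sym2.map Sum.inl '' G.edgeSet) ∪
     {e | ∃ (h : 0 < n), e = s(Sum.inl u, Sum.inr ⟨0, h⟩)} ∪
     {e | ∃ (i j : Fin n), (j : ℕ) = (i : ℕ) + 1 ∧ e = s(Sum.inr i, Sum.inr j)})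

/-- Attach to the vertex `u` of `G` a gadget consisting of a path of length `n`
starting at `u` (new vertices `Fin n`) followed by a triangle through the far end
of the path (two further new vertices `Fin 2`).  Identifying `u` with the unique
degree-one vertex of a triangle with a pendant path of length `n` hanging at one
of its vertices yields exactly this graph. -/
def attachTrianglePath {V : Type} (G : SimpleGraph V) (u : V) (n : ℕ) :
    SimpleGraph (V ⊕ (Fin n ⊕ Fin 2)) :=
  SimpleGraph.fromEdgeSet
    ((Sym2.map Sum.inl '' G.edgeSet) ∪
     {e | ∃ (h : 0 < n), e = s(Sum.inl u, Sum.inr (Sum.inl ⟨0, h⟩))} ∪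
     {e | ∃ (i j : Fin n), (j : ℕ) = (i : ℕ) + 1 ∧
        e = s(Sum.inr (Sum.inl i), Sum.inr (Sum.inl j))} ∪
     {e | ∃ (h : 0 < n) (t : Fin 2),
        e = s(Sum.inr (Sum.inl ⟨n - 1, Nat.sub_lt h one_pos⟩), Sum.inr (Sum.inr t))} ∪
     {s(Sum.inr (Sum.inr 0), Sum.inr (Sum.inr 1))})

/-- `u` lies on a triangle of `G`. -/
def OnTriangle {V : Type} (G : SimpleGraph V) (u : V) : Prop :=
  ∃ x y, G.Adj u x ∧ G.Adj u y ∧ G.Adj x y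

/-- The class 𝔗 of cactus graphs, defined recursively (up to isomorphism):
the triangle `K₃` belongs to 𝔗, and for every `G ∈ 𝔗` and every vertex `u` of
degree `2` lying on a triangle of `G`, identifying `u` with an end-vertex of an
even length path, or with the unique degree-one vertex of a graph consisting of
a triangle with an odd length path hanging at one of its vertices, yields a
graph in 𝔗. -/
inductive InT : ∀ {V : Type}, SimpleGraph V → Prop
  | triangle : InT (⊤ : SimpleGraph (Fin 3))
  | iso {V W : Type} {G : SimpleGraph V} {H : SimpleGraph W} :
      InT G → G ≃g H → InT H
  | evenPath {V : Type} {G : SimpleGraph V} (u : V) (n : ℕ) :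
      InT G → (G.neighborSet u).ncard = 2 → OnTriangle G u →
      0 < n → Even n → InT (attachPath G u n)
  | oddTrianglePath {V : Type} {G : SimpleGraph V} (u : V) (n : ℕ) :
      InT G → (G.neighborSet u).ncard = 2 → OnTriangle G u →
      Odd n → InT (attachTrianglePath G u n)


section WalkHelpers
open SimpleGraph
variable {V W : Type*}

lemma walk_const {G : SimpleGraph V} {f : V → Bool}
    (hf : ∀ a b, G.Adj a b → f a = f b) {x y : V} (p : G.Walk x y) : f x = f y := by
  induction p with
  | nil => rfl
  | cons h p ih => exact (hf _ _ h).trans ih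

lemma exists_last_edge {G : SimpleGraph V} {a b : V} (p : G.Walk a b) (hab : a ≠ b) :
    ∃ c, c ≠ b ∧ s(c, b) ∈ p.edges := by
  induction p with
  | nil => exact absurd rfl hab
  | @cons u v w h q ih =>
    by_cases hv : v = w
    · subst hv; exact ⟨u, hab, by simp⟩
    · obtain ⟨c, hc, hce⟩ := ih hv
      exact ⟨c, hc, by simp [hce]⟩

lemma two_incident_start {G : SimpleGraph V} {x : V} {q : G.Walk x x} (hq : q.IsCycle) :
    ∃ y z, y ≠ z ∧ s(x, y) ∈ q.edges ∧ s(x, z) ∈ q.edges := by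
  cases q with
  | nil => exact absurd hq Walk.IsCycle.not_of_nil
  | @cons _ v _ h r =>
    rw [Walk.cons_isCycle_iff] at hq
    obtain ⟨hr, he⟩ := hq
    obtain ⟨c, hc, hce⟩ := exists_last_edge r h.ne.symm
    refine ⟨v, c, ?_, by simp, ?_⟩
    · rintro rfl; exact he (by rwa [Sym2.eq_swap] at hce)
    · rw [Sym2.eq_swap]; simp [hce]

lemma two_incident {G : SimpleGraph V} {w : V} {p : G.Walk w w} (hp : p.IsCycle)
    {x : V} (hx : x ∈ p.support) :
    ∃ y z, y ≠ z ∧ s(x, y) ∈ p.edges ∧ s(x, z) ∈ p.edges := by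
  classical
  obtain ⟨y, z, hyz, h1, h2⟩ := two_incident_start (hp.rotate hx)
  rw [(p.rotate_edges x hx).mem_iff] at h1 h2
  exact ⟨y, z, hyz, h1, h2⟩

lemma exists_crossing_edge {G : SimpleGraph V} (f : V → Bool) {x y : V} (p : G.Walk x y)
    (hxy : f x ≠ f y) : ∃ a b, s(a, b) ∈ p.edges ∧ f a ≠ f b := by
  induction p with
  | nil => exact absurd rfl hxy
  | @cons u v w h q ih =>
    by_cases hc : f u = f v
    · obtain ⟨a, b, hab, hfab⟩ := ih (fun hvw => hxy (hc.trans hvw))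
      exact ⟨a, b, by simp [hab], hfab⟩
    · exact ⟨u, v, by simp, hc⟩

/-- Pull a walk back along an injective graph hom onto an induced subgraph. -/
lemma walk_pullback {G : SimpleGraph V} {G' : SimpleGraph W} (F : G →g G')
    (hinj : Function.Injective F)
    (hadj : ∀ a b, G'.Adj (F a) (F b) → G.Adj a b) :
    ∀ {x y : W} (p : G'.Walk x y) {a b : V} (ha : F a = x) (hb : F b = y),
      (∀ v ∈ p.support, v ∈ Set.range F) →
      ∃ q : G.Walk a b, (q.map F).copy ha hb = p := by
  intro x y p
  induction p with
  | @nil z =>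
    intro a b ha hb _
    obtain rfl : a = b := hinj (ha.trans hb.symm)
    subst ha
    exact ⟨Walk.nil, rfl⟩
  | @cons u v w h q ih =>
    intro a b ha hb hs
    obtain ⟨c, hc⟩ := hs v (by simp)
    have hadj' : G.Adj a c := hadj _ _ (by rw [ha, hc]; exact h)
    obtain ⟨r, hr⟩ := ih hc hb (fun v hv => hs v (by simp [hv]))
    refine ⟨Walk.cons hadj' r, ?_⟩
    subst ha hb
    simp only [Walk.copy_rfl_rfl] at hr ⊢
    rw [Walk.map_cons]
    subst hc
    rw [Walk.copy_rfl_rfl] at hr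
    rw [hr]

end WalkHelpers

section AdjHelpers
open SimpleGraph
variable {V : Type} {G : SimpleGraph V} {u : V} {n : ℕ}

lemma AP_adj_inl_inl {a b : V} : (attachPath G u n).Adj (Sum.inl a) (Sum.inl b) ↔ G.Adj a b := by
  simp only [attachPath, fromEdgeSet_adj, Set.mem_union, Set.mem_image, Set.mem_setOf_eq]
  constructor
  · rintro ⟨(⟨e, he, hee⟩ | ⟨h, he⟩) | ⟨i, j, hij, he⟩, hne⟩
    · induction e with
      | h x y =>
        simp only [Sym2.map_pair_eq, Sym2.eq, Sym2.rel_iff', Prod.mk.injEq, Prod.swap_prod_mk,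
          Sum.inl.injEq] at hee
        rcases hee with ⟨rfl, rfl⟩ | ⟨rfl, rfl⟩
        · exact he
        · exact he.symm
    · simp [Sym2.eq, Sym2.rel_iff', Prod.mk.injEq] at he
    · simp [Sym2.eq, Sym2.rel_iff', Prod.mk.injEq] at he
  · intro h
    exact ⟨Or.inl (Or.inl ⟨s(a, b), h, rfl⟩), by simpa using h.ne⟩

lemma AP_adj_inl_inr {a : V} {i : Fin n} :
    (attachPath G u n).Adj (Sum.inl a) (Sum.inr i) ↔ (a = u ∧ (i : ℕ) = 0) := by
  simp only [attachPath, fromEdgeSet_adj, Set.mem_union, Set.mem_image, Set.mem_setOf_eq]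
  constructor
  · rintro ⟨(⟨e, he, hee⟩ | ⟨h, he⟩) | ⟨i', j', hij, he⟩, hne⟩
    · induction e with
      | h x y => simp [Sym2.map_pair_eq, Sym2.eq, Sym2.rel_iff', Prod.mk.injEq] at hee
    · simp only [Sym2.eq, Sym2.rel_iff', Prod.mk.injEq, Prod.swap_prod_mk] at he
      rcases he with ⟨h1, h2⟩ | ⟨h1, h2⟩
      · cases h1; cases h2; exact ⟨rfl, rfl⟩
      · simp at h1
    · simp [Sym2.eq, Sym2.rel_iff', Prod.mk.injEq] at he
  · rintro ⟨rfl, hi⟩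
    have h0 : 0 < n := i.pos
    have : i = ⟨0, h0⟩ := Fin.ext hi
    subst this
    exact ⟨Or.inl (Or.inr ⟨h0, rfl⟩), by simp⟩

lemma AP_adj_inr_inr {i j : Fin n} :
    (attachPath G u n).Adj (Sum.inr i) (Sum.inr j) ↔
      ((j : ℕ) = (i : ℕ) + 1 ∨ (i : ℕ) = (j : ℕ) + 1) := by
  simp only [attachPath, fromEdgeSet_adj, Set.mem_union, Set.mem_image, Set.mem_setOf_eq]
  constructor
  · rintro ⟨(⟨e, he, hee⟩ | ⟨h, he⟩) | ⟨i', j', hij, he⟩, hne⟩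
    · induction e with
      | h x y => simp [Sym2.map_pair_eq, Sym2.eq, Sym2.rel_iff', Prod.mk.injEq] at hee
    · simp [Sym2.eq, Sym2.rel_iff', Prod.mk.injEq] at he
    · simp only [Sym2.eq, Sym2.rel_iff', Prod.mk.injEq, Prod.swap_prod_mk, Sum.inr.injEq] at he
      rcases he with ⟨rfl, rfl⟩ | ⟨rfl, rfl⟩
      · exact Or.inl hij
      · exact Or.inr hij
  · rintro (hij | hij)
    · refine ⟨Or.inr ⟨i, j, hij, rfl⟩, by simp; omega⟩
    · refine ⟨Or.inr ⟨j, i, hij, by rw [Sym2.eq_swap]⟩, by simp; omega⟩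

lemma ATP_adj_inl_inl {a b : V} :
    (attachTrianglePath G u n).Adj (Sum.inl a) (Sum.inl b) ↔ G.Adj a b := by
  simp only [attachTrianglePath, fromEdgeSet_adj, Set.mem_union, Set.mem_image, Set.mem_setOf_eq,
    Set.mem_singleton_iff]
  constructor
  · rintro ⟨((((⟨e, he, hee⟩ | ⟨h, he⟩) | ⟨i, j, hij, he⟩) | ⟨h, t, he⟩) | he), hne⟩
    · induction e with
      | h x y =>
        simp only [Sym2.map_pair_eq, Sym2.eq, Sym2.rel_iff', Prod.mk.injEq, Prod.swap_prod_mk,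
          Sum.inl.injEq] at hee
        rcases hee with ⟨rfl, rfl⟩ | ⟨rfl, rfl⟩
        · exact he
        · exact he.symm
    all_goals simp [Sym2.eq, Sym2.rel_iff', Prod.mk.injEq] at he
  · intro h
    exact ⟨Or.inl (Or.inl (Or.inl (Or.inl ⟨s(a, b), h, rfl⟩))), by simpa using h.ne⟩

lemma ATP_adj_inl_inrl {a : V} {i : Fin n} :
    (attachTrianglePath G u n).Adj (Sum.inl a) (Sum.inr (Sum.inl i)) ↔ (a = u ∧ (i : ℕ) = 0) := by
  simp only [attachTrianglePath, fromEdgeSet_adj, Set.mem_union, Set.mem_image, Set.mem_setOf_eq,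
    Set.mem_singleton_iff]
  constructor
  · rintro ⟨((((⟨e, he, hee⟩ | ⟨h, he⟩) | ⟨i', j', hij, he⟩) | ⟨h, t, he⟩) | he), hne⟩
    · induction e with
      | h x y => simp [Sym2.map_pair_eq, Sym2.eq, Sym2.rel_iff', Prod.mk.injEq] at hee
    · simp only [Sym2.eq, Sym2.rel_iff', Prod.mk.injEq, Prod.swap_prod_mk, Sum.inl.injEq,
        Sum.inr.injEq] at he
      rcases he with ⟨h1, h2⟩ | ⟨h1, h2⟩
      · cases h1; cases h2; exact ⟨rfl, rfl⟩
      · simp at h1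
    all_goals simp [Sym2.eq, Sym2.rel_iff', Prod.mk.injEq] at he
  · rintro ⟨rfl, hi⟩
    have h0 : 0 < n := i.pos
    have : i = ⟨0, h0⟩ := Fin.ext hi
    subst this
    exact ⟨Or.inl (Or.inl (Or.inl (Or.inr ⟨h0, rfl⟩))), by simp⟩

lemma ATP_adj_inl_inrr {a : V} {t : Fin 2} :
    ¬ (attachTrianglePath G u n).Adj (Sum.inl a) (Sum.inr (Sum.inr t)) := by
  simp only [attachTrianglePath, fromEdgeSet_adj, Set.mem_union, Set.mem_image, Set.mem_setOf_eq,
    Set.mem_singleton_iff]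
  rintro ⟨((((⟨e, he, hee⟩ | ⟨h, he⟩) | ⟨i', j', hij, he⟩) | ⟨h, t', he⟩) | he), hne⟩
  · induction e with
    | h x y => simp [Sym2.map_pair_eq, Sym2.eq, Sym2.rel_iff', Prod.mk.injEq] at hee
  all_goals simp [Sym2.eq, Sym2.rel_iff', Prod.mk.injEq] at he

lemma ATP_adj_inrl_inrl {i j : Fin n} :
    (attachTrianglePath G u n).Adj (Sum.inr (Sum.inl i)) (Sum.inr (Sum.inl j)) ↔
      ((j : ℕ) = (i : ℕ) + 1 ∨ (i : ℕ) = (j : ℕ) + 1) := by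
  simp only [attachTrianglePath, fromEdgeSet_adj, Set.mem_union, Set.mem_image, Set.mem_setOf_eq,
    Set.mem_singleton_iff]
  constructor
  · rintro ⟨((((⟨e, he, hee⟩ | ⟨h, he⟩) | ⟨i', j', hij, he⟩) | ⟨h, t', he⟩) | he), hne⟩
    · induction e with
      | h x y => simp [Sym2.map_pair_eq, Sym2.eq, Sym2.rel_iff', Prod.mk.injEq] at hee
    · simp [Sym2.eq, Sym2.rel_iff', Prod.mk.injEq] at he
    · simp only [Sym2.eq, Sym2.rel_iff', Prod.mk.injEq, Prod.swap_prod_mk, Sum.inr.injEq,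
        Sum.inl.injEq] at he
      rcases he with ⟨rfl, rfl⟩ | ⟨rfl, rfl⟩
      · exact Or.inl hij
      · exact Or.inr hij
    all_goals simp [Sym2.eq, Sym2.rel_iff', Prod.mk.injEq] at he
  · rintro (hij | hij)
    · refine ⟨Or.inl (Or.inl (Or.inr ⟨i, j, hij, rfl⟩)), by simp [Fin.ext_iff]; omega⟩
    · refine ⟨Or.inl (Or.inl (Or.inr ⟨j, i, hij, by rw [Sym2.eq_swap]⟩)), by simp [Fin.ext_iff]; omega⟩

lemma ATP_adj_inrl_inrr {i : Fin n} {t : Fin 2} :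
    (attachTrianglePath G u n).Adj (Sum.inr (Sum.inl i)) (Sum.inr (Sum.inr t)) ↔
      (0 < n ∧ (i : ℕ) = n - 1) := by
  simp only [attachTrianglePath, fromEdgeSet_adj, Set.mem_union, Set.mem_image, Set.mem_setOf_eq,
    Set.mem_singleton_iff]
  constructor
  · rintro ⟨((((⟨e, he, hee⟩ | ⟨h, he⟩) | ⟨i', j', hij, he⟩) | ⟨h, t', he⟩) | he), hne⟩
    · induction e with
      | h x y => simp [Sym2.map_pair_eq, Sym2.eq, Sym2.rel_iff', Prod.mk.injEq] at hee
    · simp [Sym2.eq, Sym2.rel_iff', Prod.mk.injEq] at he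
    · simp [Sym2.eq, Sym2.rel_iff', Prod.mk.injEq] at he
    · simp only [Sym2.eq, Sym2.rel_iff', Prod.mk.injEq, Prod.swap_prod_mk, Sum.inr.injEq,
        Sum.inl.injEq] at he
      rcases he with ⟨h1, h2⟩ | ⟨h1, h2⟩
      · cases h1; exact ⟨h, rfl⟩
      · simp at h1
    · simp [Sym2.eq, Sym2.rel_iff', Prod.mk.injEq] at he
  · rintro ⟨h0, hi⟩
    have : i = ⟨n - 1, Nat.sub_lt h0 one_pos⟩ := Fin.ext hi
    subst this
    exact ⟨Or.inl (Or.inr ⟨h0, t, rfl⟩), by simp⟩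

lemma ATP_adj_inrr_inrr {s t : Fin 2} :
    (attachTrianglePath G u n).Adj (Sum.inr (Sum.inr s)) (Sum.inr (Sum.inr t)) ↔ s ≠ t := by
  simp only [attachTrianglePath, fromEdgeSet_adj, Set.mem_union, Set.mem_image, Set.mem_setOf_eq,
    Set.mem_singleton_iff]
  constructor
  · rintro ⟨_, hne⟩
    simpa using hne
  · intro hst
    have : (s = 0 ∧ t = 1) ∨ (s = 1 ∧ t = 0) := by omega
    refine ⟨Or.inr ?_, by simpa using hst⟩
    rcases this with ⟨rfl, rfl⟩ | ⟨rfl, rfl⟩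
    · rfl
    · rw [Sym2.eq_swap]

end AdjHelpers
section Separation
open SimpleGraph
variable {V : Type*}

lemma not_mem_cycle_of_separating {G : SimpleGraph V} {v w : V} (f : V → Bool)
    (hf : ∀ a b, G.Adj a b → s(a, b) ≠ s(v, w) → f a = f b) (hvw : f v ≠ f w)
    {x : V} (p : G.Walk x x) (hp : p.IsCycle) : s(v, w) ∉ p.edges := by
  intro he
  obtain ⟨-, hr⟩ := SimpleGraph.adj_and_reachable_delete_edges_iff_exists_cycle.2 ⟨x, p, hp, he⟩
  obtain ⟨q⟩ := hr
  refine hvw (walk_const ?_ q)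
  intro a b hab
  rw [SimpleGraph.deleteEdges_adj] at hab
  obtain ⟨hab1, hab2⟩ := hab
  refine hf a b hab1 ?_
  intro hh
  exact hab2 (by simp [hh])

end Separation
section SameSide
open SimpleGraph
variable {V : Type*}

lemma cycle_same_side {G : SimpleGraph V} (f : V → Bool)
    {x : V} {p : G.Walk x x} (hp : p.IsCycle)
    (hcross : ∀ a b, G.Adj a b → s(a, b) ∈ p.edges → f a = f b) :
    ∀ y ∈ p.support, ∀ z ∈ p.support, f y = f z := by
  classical
  have key : ∀ y ∈ p.support, f x = f y := by
    intro y hy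
    by_contra hne
    obtain ⟨a, b, hab, hfab⟩ := exists_crossing_edge f (p.takeUntil y hy) hne
    have : s(a, b) ∈ p.edges := p.edges_takeUntil_subset hy hab
    exact hfab (hcross a b (p.adj_of_mem_edges this) this)
  intro y hy z hz
  rw [← key y hy, key z hz]

end SameSide
section MyHelpers

variable {V' W' : Type*}

/-- The conjunction of structural properties we prove by induction. -/
def Good {Vt : Type} (G : SimpleGraph Vt) : Prop :=
  G.Connected ∧
  (∀ v, (G.neighborSet v).ncard ≤ 3) ∧
  (∀ (w : Vt) (p : G.Walk w w), p.IsCycle → p.length = 3) ∧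
  (∀ (a b : Vt) (p : G.Walk a a) (q : G.Walk b b), p.IsCycle → q.IsCycle →
    (∃ x, x ∈ p.support ∧ x ∈ q.support) → ∀ e, e ∈ p.edges ↔ e ∈ q.edges)

lemma Good.isCactus {Vt : Type} {G : SimpleGraph Vt} (h : Good G) : IsCactus G := by
  intro a b p q hp hq he f
  obtain ⟨e, hep, heq⟩ := he
  induction e using Sym2.ind with
  | _ x y =>
    exact h.2.2.2 a b p q hp hq
      ⟨x, p.fst_mem_support_of_mem_edges hep, q.fst_mem_support_of_mem_edges heq⟩ f

lemma good_triangle : Good (⊤ : SimpleGraph (Fin 3)) := by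
  have hcyc : ∀ (w : Fin 3) (p : (⊤ : SimpleGraph (Fin 3)).Walk w w), p.IsCycle →
      (p.length = 3 ∧ ∀ e, e ∈ p.edges ↔ e ∈ (⊤ : SimpleGraph (Fin 3)).edgeFinset) := by
    intro w p hp
    have hlen : p.length = 3 := by
      have h1 := hp.three_le_length
      have h2 : p.support.tail.length ≤ 3 := by
        simpa using hp.2.length_le_card
      have h3 : p.support.length = p.length + 1 := p.length_support
      have h4 : p.support.tail.length = p.support.length - 1 := by
        simp [List.length_tail]
      omega
    refine ⟨hlen, ?_⟩
    have hnodup : p.edges.Nodup := hp.edges_nodup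
    have hsub : p.edges.toFinset ⊆ (⊤ : SimpleGraph (Fin 3)).edgeFinset := by
      intro e he
      rw [List.mem_toFinset] at he
      exact SimpleGraph.mem_edgeFinset.2 (p.edges_subset_edgeSet he)
    have hcard : p.edges.toFinset.card = 3 := by
      rw [List.toFinset_card_of_nodup hnodup, SimpleGraph.Walk.length_edges, hlen]
    have hcard3 : ((⊤ : SimpleGraph (Fin 3)).edgeFinset).card = 3 := by decide
    have heq : p.edges.toFinset = (⊤ : SimpleGraph (Fin 3)).edgeFinset :=
      Finset.eq_of_subset_of_card_le hsub (by omega)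
    intro e
    rw [← List.mem_toFinset, heq]
  refine ⟨SimpleGraph.connected_top, ?_, fun w p hp => (hcyc w p hp).1, ?_⟩
  · intro v
    calc ((⊤ : SimpleGraph (Fin 3)).neighborSet v).ncard ≤ (Set.univ : Set (Fin 3)).ncard :=
          Set.ncard_le_ncard (Set.subset_univ _) Set.finite_univ
      _ = 3 := by rw [Set.ncard_univ]; simp
  · intro a b p q hp hq _ e
    rw [(hcyc a p hp).2 e, (hcyc b q hq).2 e]

end MyHelpers
lemma good_of_pullback {Vt Wt : Type} {G : SimpleGraph Vt} {G' : SimpleGraph Wt}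
    (hG : Good G) (F : G →g G') (hinj : Function.Injective F)
    (hconn : G'.Connected) (hdeg : ∀ v, (G'.neighborSet v).ncard ≤ 3)
    (hpull : ∀ (w : Wt) (p : G'.Walk w w), p.IsCycle →
      ∃ (a : Vt) (q : G.Walk a a), q.IsCycle ∧ p.length = q.length ∧
        p.support = q.support.map F ∧ p.edges = q.edges.map (Sym2.map F)) :
    Good G' := by
  refine ⟨hconn, hdeg, ?_, ?_⟩
  · intro w p hp
    obtain ⟨a, q, hq, hlen, _, _⟩ := hpull w p hp
    rw [hlen]; exact hG.2.2.1 a q hq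
  · intro a b p q hp hq hx e
    obtain ⟨x, hxp, hxq⟩ := hx
    obtain ⟨a', p', hp', _, hps, hpe⟩ := hpull a p hp
    obtain ⟨b', q', hq', _, hqs, hqe⟩ := hpull b q hq
    rw [hps] at hxp; rw [hqs] at hxq
    obtain ⟨x1, hx1, rfl⟩ := List.mem_map.1 hxp
    obtain ⟨x2, hx2, hx12⟩ := List.mem_map.1 hxq
    obtain rfl : x2 = x1 := hinj hx12
    have hiff := hG.2.2.2 a' b' p' q' hp' hq' ⟨x2, hx1, hx2⟩
    rw [hpe, hqe]
    constructor
    · intro he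
      obtain ⟨e', he', rfl⟩ := List.mem_map.1 he
      exact List.mem_map_of_mem ((hiff e').1 he')
    · intro he
      obtain ⟨e', he', rfl⟩ := List.mem_map.1 he
      exact List.mem_map_of_mem ((hiff e').2 he')

lemma good_iso {Vt Wt : Type} {G : SimpleGraph Vt} {H : SimpleGraph Wt}
    (hG : Good G) (e : G ≃g H) : Good H := by
  refine good_of_pullback hG e.toHom e.toEquiv.injective
    ((SimpleGraph.Iso.connected_iff e).1 ?hc) ?hd ?hp
  case hc => exact hG.1
  case hd =>
    intro v
    have : (H.neighborSet v).ncard = (G.neighborSet (e.symm v)).ncard := by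
      rw [← Nat.card_coe_set_eq, ← Nat.card_coe_set_eq]
      refine Nat.card_congr (Equiv.symm ?_)
      have := e.mapNeighborSet (e.symm v)
      rwa [e.apply_symm_apply] at this
    rw [this]; exact hG.2.1 _
  case hp =>
    intro w p hp
    refine ⟨e.symm w, p.map e.symm.toHom, hp.map e.symm.toEquiv.injective, ?_, ?_, ?_⟩
    · rw [SimpleGraph.Walk.length_map]
    · rw [SimpleGraph.Walk.support_map, List.map_map]
      symm
      have h1 : ∀ x ∈ p.support, (e.toHom ∘ e.symm.toHom) x = x := fun x _ => e.apply_symm_apply x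
      calc p.support.map (e.toHom ∘ e.symm.toHom) = p.support.map id := List.map_congr_left h1
        _ = p.support := List.map_id _
    · rw [SimpleGraph.Walk.edges_map, List.map_map]
      symm
      have h1 : ∀ x ∈ p.edges, (Sym2.map e.toHom ∘ Sym2.map e.symm.toHom) x = x := by
        intro x _
        induction x using Sym2.ind with
        | _ a b => simp
      calc p.edges.map (Sym2.map e.toHom ∘ Sym2.map e.symm.toHom) = p.edges.map id :=
            List.map_congr_left h1
        _ = p.edges := List.map_id _
section AttachPathStep
open SimpleGraph
variable {Vt : Type} {G : SimpleGraph Vt} {u : Vt} {n : ℕ}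

/-- The inclusion homomorphism `G →g attachPath G u n`. -/
def APF (G : SimpleGraph Vt) (u : Vt) (n : ℕ) : G →g attachPath G u n :=
  ⟨Sum.inl, fun h => AP_adj_inl_inl.2 h⟩

lemma APF_inj : Function.Injective (APF G u n) := Sum.inl_injective

lemma AP_bridge_not_in_cycle {h0 : 0 < n} {x : Vt ⊕ Fin n}
    {p : (attachPath G u n).Walk x x} (hp : p.IsCycle) :
    s(Sum.inl u, Sum.inr (⟨0, h0⟩ : Fin n)) ∉ p.edges := by
  refine not_mem_cycle_of_separating (fun m => m.isLeft) ?_ (by simp) p hp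
  rintro (a | i) (b | j) hab hne
  · rfl
  · exfalso
    obtain ⟨rfl, hj⟩ := AP_adj_inl_inr.1 hab
    exact hne (by rw [show j = ⟨0, h0⟩ from Fin.ext hj])
  · exfalso
    obtain ⟨rfl, hi⟩ := AP_adj_inl_inr.1 hab.symm
    exact hne (by rw [show i = ⟨0, h0⟩ from Fin.ext hi, Sym2.eq_swap])
  · rfl

lemma AP_path_edge_not_in_cycle {i j : Fin n} (hij : (j : ℕ) = (i : ℕ) + 1) {x : Vt ⊕ Fin n}
    {p : (attachPath G u n).Walk x x} (hp : p.IsCycle) :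
    s(Sum.inr i, Sum.inr j) ∉ p.edges := by
  refine not_mem_cycle_of_separating
    (fun m => match m with | Sum.inl _ => true | Sum.inr m => decide ((m : ℕ) ≤ (i : ℕ)))
    ?_ (by simp; omega) p hp
  rintro (a | k) (b | l) hab hne
  · rfl
  · obtain ⟨rfl, hl⟩ := AP_adj_inl_inr.1 hab
    simp only [decide_eq_true_eq]
    simp [hl]
  · obtain ⟨rfl, hk⟩ := AP_adj_inl_inr.1 hab.symm
    simp only [decide_eq_true_eq]
    simp [hk]
  · rcases AP_adj_inr_inr.1 hab with hkl | hkl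
    · -- l = k + 1
      have hk : (k : ℕ) ≠ (i : ℕ) := by
        intro h
        exact hne (by rw [show k = i from Fin.ext h, show l = j from Fin.ext (by omega)])
      simp only [decide_eq_decide]
      omega
    · -- k = l + 1
      have hl : (l : ℕ) ≠ (i : ℕ) := by
        intro h
        exact hne (by
          rw [show l = i from Fin.ext h, show k = j from Fin.ext (by omega), Sym2.eq_swap])
      simp only [decide_eq_decide]
      omega

lemma AP_cycle_support_inl {x : Vt ⊕ Fin n} {p : (attachPath G u n).Walk x x}
    (hp : p.IsCycle) : ∀ y ∈ p.support, ∃ a, y = Sum.inl a := by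
  intro y hy
  rcases y with a | v
  · exact ⟨a, rfl⟩
  exfalso
  obtain ⟨z, z', hzz, hz, hz'⟩ := two_incident hp hy
  -- both edges are incident to `Sum.inr v`, hence are bridges; derive contradiction from hz
  have key : ∀ z : Vt ⊕ Fin n, s(Sum.inr v, z) ∈ p.edges → False := by
    intro z hz
    have hadj := p.adj_of_mem_edges hz
    rcases z with b | j
    · obtain ⟨rfl, hv⟩ := AP_adj_inl_inr.1 hadj.symm
      have h0 : 0 < n := v.pos
      have : v = ⟨0, h0⟩ := Fin.ext hv
      subst this
      exact AP_bridge_not_in_cycle (h0 := h0) hp (by rwa [Sym2.eq_swap] at hz)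
    · rcases AP_adj_inr_inr.1 hadj with hvj | hvj
      · exact AP_path_edge_not_in_cycle hvj hp hz
      · exact AP_path_edge_not_in_cycle hvj hp (by rwa [Sym2.eq_swap] at hz)
  exact key z hz

lemma AP_connected (hG : G.Connected) (h0 : 0 < n) : (attachPath G u n).Connected := by
  rw [connected_iff_exists_forall_reachable]
  refine ⟨Sum.inl u, ?_⟩
  have hpath : ∀ (m : ℕ) (hm : m < n),
      (attachPath G u n).Reachable (Sum.inl u) (Sum.inr ⟨m, hm⟩) := by
    intro m
    induction m with
    | zero => exact fun hm => (AP_adj_inl_inr.2 ⟨rfl, rfl⟩).reachable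
    | succ k ih =>
      intro hm
      refine (ih (by omega)).trans (SimpleGraph.Adj.reachable ?_)
      exact AP_adj_inr_inr.2 (Or.inl rfl)
  rintro (a | i)
  · exact SimpleGraph.Reachable.map (APF G u n) (hG.preconnected u a)
  · have : i = ⟨(i : ℕ), i.2⟩ := Fin.ext rfl
    rw [this]
    exact hpath i i.2

lemma AP_deg (hdeg : ∀ v, (G.neighborSet v).ncard ≤ 3) (hu : (G.neighborSet u).ncard = 2) :
    ∀ v, ((attachPath G u n).neighborSet v).ncard ≤ 3 := by
  rintro (v | i)
  · by_cases hfin : (G.neighborSet v).Finite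
    swap
    · have himg : (Sum.inl '' G.neighborSet v : Set (Vt ⊕ Fin n)).Infinite :=
        Set.Infinite.image Sum.inl_injective.injOn hfin
      have hinf : ((attachPath G u n).neighborSet (Sum.inl v)).Infinite := by
        refine himg.mono ?_
        intro x hx
        obtain ⟨b, hb, rfl⟩ := hx
        exact AP_adj_inl_inl.2 hb
      rw [hinf.ncard]
      omega
    · by_cases hv : v = u
      · subst hv
        have hsub : (attachPath G v n).neighborSet (Sum.inl v) ⊆
            insert (if h : 0 < n then (Sum.inr ⟨0, h⟩ : Vt ⊕ Fin n) else Sum.inl v)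
              (Sum.inl '' G.neighborSet v) := by
          rintro (b | j) hx
          · exact Set.mem_insert_of_mem _ ⟨b, AP_adj_inl_inl.1 hx, rfl⟩
          · obtain ⟨-, hj⟩ := AP_adj_inl_inr.1 hx
            have h0 : 0 < n := j.pos
            rw [dif_pos h0]
            exact Set.mem_insert_iff.2 (Or.inl (by rw [show j = ⟨0, h0⟩ from Fin.ext hj]))
        calc ((attachPath G v n).neighborSet (Sum.inl v)).ncard
            ≤ (insert (if h : 0 < n then (Sum.inr ⟨0, h⟩ : Vt ⊕ Fin n) else Sum.inl v)
              (Sum.inl '' G.neighborSet v)).ncard :=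
              Set.ncard_le_ncard hsub (((hfin.image _).insert _))
          _ ≤ (Sum.inl '' G.neighborSet v).ncard + 1 := Set.ncard_insert_le _ _
          _ = (G.neighborSet v).ncard + 1 := by
              rw [Set.ncard_image_of_injective _ Sum.inl_injective]
          _ ≤ 3 := by rw [hu]
      · have hsub : (attachPath G u n).neighborSet (Sum.inl v) ⊆ Sum.inl '' G.neighborSet v := by
          rintro (b | j) hx
          · exact ⟨b, AP_adj_inl_inl.1 hx, rfl⟩
          · exact absurd (AP_adj_inl_inr.1 hx).1 hv
        calc ((attachPath G u n).neighborSet (Sum.inl v)).ncard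
            ≤ (Sum.inl '' G.neighborSet v).ncard := Set.ncard_le_ncard hsub (hfin.image _)
          _ = (G.neighborSet v).ncard := Set.ncard_image_of_injective _ Sum.inl_injective
          _ ≤ 3 := hdeg v
  · set x1 : Vt ⊕ Fin n := if (i : ℕ) = 0 then Sum.inl u else
      Sum.inr ⟨(i : ℕ) - 1, by omega⟩ with hx1
    set x2 : Vt ⊕ Fin n := if h : (i : ℕ) + 1 < n then Sum.inr ⟨(i : ℕ) + 1, h⟩ else Sum.inl u
      with hx2
    have hsub : (attachPath G u n).neighborSet (Sum.inr i) ⊆ {x1, x2} := by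
      rintro (b | j) hx
      · obtain ⟨rfl, hi⟩ := AP_adj_inl_inr.1 hx.symm
        exact Or.inl (by rw [hx1, if_pos hi])
      · rcases AP_adj_inr_inr.1 hx with hj | hj
        · have hlt : (i : ℕ) + 1 < n := by have := j.2; omega
          refine Or.inr ?_
          rw [hx2, dif_pos hlt]
          simp only [Set.mem_singleton_iff]
          congr 1
          exact Fin.ext hj
        · refine Or.inl ?_
          rw [hx1, if_neg (by omega)]
          congr 1
          refine Fin.ext ?_
          simp only [Fin.val_mk]
          omega
    calc ((attachPath G u n).neighborSet (Sum.inr i)).ncard ≤ ({x1, x2} : Set (Vt ⊕ Fin n)).ncard :=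
          Set.ncard_le_ncard hsub (Set.toFinite _)
      _ ≤ 2 := (Set.ncard_insert_le _ _).trans (by simp)
      _ ≤ 3 := by omega

lemma AP_good (hG : Good G) (hu : (G.neighborSet u).ncard = 2) (h0 : 0 < n) :
    Good (attachPath G u n) := by
  refine good_of_pullback hG (APF G u n) APF_inj (AP_connected hG.1 h0) (AP_deg hG.2.1 hu) ?_
  intro w p hp
  obtain ⟨a, rfl⟩ := AP_cycle_support_inl hp w p.start_mem_support
  have ha : (APF G u n) a = Sum.inl a := rfl
  obtain ⟨q, hq⟩ := walk_pullback (APF G u n) APF_inj (fun a b h => AP_adj_inl_inl.1 h) p ha ha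
    (fun v hv => by obtain ⟨b, rfl⟩ := AP_cycle_support_inl hp v hv; exact ⟨b, rfl⟩)
  refine ⟨a, q, ?_, ?_, ?_, ?_⟩
  · rw [← hq, SimpleGraph.Walk.isCycle_copy] at hp
    exact (SimpleGraph.Walk.map_isCycle_iff_of_injective APF_inj).1 hp
  · rw [← hq, SimpleGraph.Walk.length_copy, SimpleGraph.Walk.length_map]
  · rw [← hq, SimpleGraph.Walk.support_copy, SimpleGraph.Walk.support_map]
  · rw [← hq, SimpleGraph.Walk.edges_copy, SimpleGraph.Walk.edges_map]

end AttachPathStep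
section AttachTrianglePathStep
open SimpleGraph
variable {Vt : Type} {G : SimpleGraph Vt} {u : Vt} {n : ℕ}

def ATPF (G : SimpleGraph Vt) (u : Vt) (n : ℕ) : G →g attachTrianglePath G u n :=
  ⟨Sum.inl, fun h => ATP_adj_inl_inl.2 h⟩

lemma ATPF_inj : Function.Injective (ATPF G u n) := Sum.inl_injective

lemma ATP_bridge_not_in_cycle {h0 : 0 < n} {x : Vt ⊕ (Fin n ⊕ Fin 2)}
    {p : (attachTrianglePath G u n).Walk x x} (hp : p.IsCycle) :
    s(Sum.inl u, Sum.inr (Sum.inl (⟨0, h0⟩ : Fin n))) ∉ p.edges := by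
  refine not_mem_cycle_of_separating (fun m => m.isLeft) ?_ (by simp) p hp
  rintro (a | (i | t)) (b | (j | t')) hab hne
  · rfl
  · exfalso
    obtain ⟨rfl, hj⟩ := ATP_adj_inl_inrl.1 hab
    exact hne (by rw [show j = ⟨0, h0⟩ from Fin.ext hj])
  · exact absurd hab ATP_adj_inl_inrr
  · exfalso
    obtain ⟨rfl, hi⟩ := ATP_adj_inl_inrl.1 hab.symm
    exact hne (by rw [show i = ⟨0, h0⟩ from Fin.ext hi, Sym2.eq_swap])
  · rfl
  · rfl
  · exact absurd hab.symm ATP_adj_inl_inrr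
  · rfl
  · rfl

lemma ATP_path_edge_not_in_cycle {i j : Fin n} (hij : (j : ℕ) = (i : ℕ) + 1)
    {x : Vt ⊕ (Fin n ⊕ Fin 2)}
    {p : (attachTrianglePath G u n).Walk x x} (hp : p.IsCycle) :
    s(Sum.inr (Sum.inl i), Sum.inr (Sum.inl j)) ∉ p.edges := by
  refine not_mem_cycle_of_separating
    (fun m => match m with
      | Sum.inl _ => true
      | Sum.inr (Sum.inl m) => decide ((m : ℕ) ≤ (i : ℕ))
      | Sum.inr (Sum.inr _) => false)
    ?_ (by simp; omega) p hp
  rintro (a | (k | t)) (b | (l | t')) hab hne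
  · rfl
  · obtain ⟨rfl, hl⟩ := ATP_adj_inl_inrl.1 hab
    simp [hl]
  · exact absurd hab ATP_adj_inl_inrr
  · obtain ⟨rfl, hk⟩ := ATP_adj_inl_inrl.1 hab.symm
    simp [hk]
  · rcases ATP_adj_inrl_inrl.1 hab with hkl | hkl
    · have hk : (k : ℕ) ≠ (i : ℕ) := by
        intro h
        exact hne (by rw [show k = i from Fin.ext h, show l = j from Fin.ext (by omega)])
      simp only [decide_eq_decide]
      omega
    · have hl : (l : ℕ) ≠ (i : ℕ) := by
        intro h
        exact hne (by
          rw [show l = i from Fin.ext h, show k = j from Fin.ext (by omega), Sym2.eq_swap])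
      simp only [decide_eq_decide]
      omega
  · -- k is adjacent to a triangle vertex, so (k : ℕ) = n - 1 > i
    obtain ⟨h0, hk⟩ := ATP_adj_inrl_inrr.1 hab
    have hj2 := j.2
    simp only [decide_eq_false_iff_not, not_le]
    omega
  · exact absurd hab.symm ATP_adj_inl_inrr
  · obtain ⟨h0, hl⟩ := ATP_adj_inrl_inrr.1 hab.symm
    have hj2 := j.2
    symm
    simp only [decide_eq_false_iff_not, not_le]
    omega
  · rfl

end AttachTrianglePathStep
section ATP2
open SimpleGraph
variable {Vt : Type} {G : SimpleGraph Vt} {u : Vt} {n : ℕ}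

/-- Abbreviations for the triangle vertices. -/
private def AV (Vt : Type) (n : ℕ) (h0 : 0 < n) : Vt ⊕ (Fin n ⊕ Fin 2) :=
  Sum.inr (Sum.inl ⟨n - 1, Nat.sub_lt h0 one_pos⟩)

private def TV (Vt : Type) (n : ℕ) (t : Fin 2) : Vt ⊕ (Fin n ⊕ Fin 2) :=
  Sum.inr (Sum.inr t)

lemma ATP_T_edges (h0 : 0 < n) {x : Vt ⊕ (Fin n ⊕ Fin 2)}
    {p : (attachTrianglePath G u n).Walk x x} (hp : p.IsCycle)
    {t : Fin 2} (ht : Sum.inr (Sum.inr t) ∈ p.support) :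
    s(TV Vt n t, AV Vt n h0) ∈ p.edges ∧ s(TV Vt n 0, TV Vt n 1) ∈ p.edges := by
  obtain ⟨y, z, hyz, hy, hz⟩ := two_incident hp ht
  have hclass : ∀ w, s(Sum.inr (Sum.inr t), w) ∈ p.edges →
      w = AV Vt n h0 ∨ ∃ t', t' ≠ t ∧ w = TV Vt n t' := by
    rintro (b | (i | t')) hw
    · exact absurd (p.adj_of_mem_edges hw).symm ATP_adj_inl_inrr
    · obtain ⟨-, hi⟩ := ATP_adj_inrl_inrr.1 (p.adj_of_mem_edges hw).symm
      exact Or.inl (by rw [AV, show i = ⟨n - 1, Nat.sub_lt h0 one_pos⟩ from Fin.ext hi])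
    · exact Or.inr ⟨t', (ATP_adj_inrr_inrr.1 (p.adj_of_mem_edges hw)).symm, rfl⟩
  have htri : ∀ t' : Fin 2, t' ≠ t → s(TV Vt n 0, TV Vt n 1) =
      s(Sum.inr (Sum.inr t), TV Vt n t') := by
    intro t' ht'
    have : (t = 0 ∧ t' = 1) ∨ (t = 1 ∧ t' = 0) := by omega
    rcases this with ⟨rfl, rfl⟩ | ⟨rfl, rfl⟩
    · rfl
    · rw [Sym2.eq_swap]; rfl
  rcases hclass y hy with rfl | ⟨ty, hty, rfl⟩ <;> rcases hclass z hz with rfl | ⟨tz, htz, rfl⟩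
  · exact absurd rfl hyz
  · exact ⟨hy, by rw [htri tz htz]; exact hz⟩
  · exact ⟨hz, by rw [htri ty hty]; exact hy⟩
  · exfalso
    have : ty = tz := by omega
    exact hyz (by rw [this])

lemma ATP_A_edges (h0 : 0 < n) {x : Vt ⊕ (Fin n ⊕ Fin 2)}
    {p : (attachTrianglePath G u n).Walk x x} (hp : p.IsCycle)
    (hA : AV Vt n h0 ∈ p.support) :
    s(AV Vt n h0, TV Vt n 0) ∈ p.edges ∧ s(AV Vt n h0, TV Vt n 1) ∈ p.edges := by
  obtain ⟨y, z, hyz, hy, hz⟩ := two_incident hp hA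
  have hclass : ∀ w, s(AV Vt n h0, w) ∈ p.edges → ∃ t : Fin 2, w = TV Vt n t := by
    rintro (b | (j | t)) hw
    · exfalso
      obtain ⟨rfl, hj⟩ := ATP_adj_inl_inrl.1 (p.adj_of_mem_edges hw).symm
      simp only [AV, Fin.val_mk] at hj
      refine ATP_bridge_not_in_cycle (h0 := h0) hp ?_
      rw [Sym2.eq_swap] at hw
      rw [show (⟨0, h0⟩ : Fin n) = ⟨n - 1, Nat.sub_lt h0 one_pos⟩ from
        Fin.ext (by simp only [Fin.val_mk]; omega)]
      exact hw
    · exfalso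
      rcases ATP_adj_inrl_inrl.1 (p.adj_of_mem_edges hw) with hj | hj
      · simp only [AV, Fin.val_mk] at hj
        have := j.2
        omega
      · refine ATP_path_edge_not_in_cycle (i := j) (j := ⟨n - 1, Nat.sub_lt h0 one_pos⟩) hj hp ?_
        rw [Sym2.eq_swap] at hw
        exact hw
    · exact ⟨t, rfl⟩
  obtain ⟨ty, rfl⟩ := hclass y hy
  obtain ⟨tz, rfl⟩ := hclass z hz
  have hne : ty ≠ tz := fun h => hyz (by rw [h])
  have : (ty = 0 ∧ tz = 1) ∨ (ty = 1 ∧ tz = 0) := by omega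
  rcases this with ⟨rfl, rfl⟩ | ⟨rfl, rfl⟩
  · exact ⟨hy, hz⟩
  · exact ⟨hz, hy⟩

end ATP2
section ATP3
open SimpleGraph
variable {Vt : Type} {G : SimpleGraph Vt} {u : Vt} {n : ℕ}

lemma ATP_cycle_dichotomy (h0 : 0 < n) {x : Vt ⊕ (Fin n ⊕ Fin 2)}
    {p : (attachTrianglePath G u n).Walk x x} (hp : p.IsCycle) :
    (∀ y ∈ p.support, ∃ a, y = Sum.inl a) ∨
    ((∀ y ∈ p.support, ∃ c, y = Sum.inr c) ∧
     ∀ e, e ∈ p.edges ↔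
       (e = s(AV Vt n h0, TV Vt n 0) ∨ e = s(AV Vt n h0, TV Vt n 1) ∨
        e = s(TV Vt n 0, TV Vt n 1))) := by
  classical
  -- all support vertices lie on the same side
  have hside := cycle_same_side (fun m => m.isLeft) hp ?hcross
  case hcross =>
    rintro (a | c) (b | c') hab he
    · rfl
    · exfalso
      rcases c' with i | t
      · obtain ⟨rfl, hi⟩ := ATP_adj_inl_inrl.1 hab
        refine ATP_bridge_not_in_cycle (h0 := h0) hp ?_
        rwa [show (⟨0, h0⟩ : Fin n) = i from Fin.ext (by simp only [Fin.val_mk]; omega)]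
      · exact ATP_adj_inl_inrr hab
    · exfalso
      rcases c with i | t
      · obtain ⟨rfl, hi⟩ := ATP_adj_inl_inrl.1 hab.symm
        refine ATP_bridge_not_in_cycle (h0 := h0) hp ?_
        rw [Sym2.eq_swap] at he
        rwa [show (⟨0, h0⟩ : Fin n) = i from Fin.ext (by simp only [Fin.val_mk]; omega)]
      · exact ATP_adj_inl_inrr hab.symm
    · rfl
  rcases Classical.em (∀ y ∈ p.support, ∃ a, y = Sum.inl a) with hall | hall
  · exact Or.inl hall
  refine Or.inr ?_
  push_neg at hall
  obtain ⟨y0, hy0, hy0r⟩ := hall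
  obtain ⟨c0, rfl⟩ : ∃ c, y0 = Sum.inr c := by
    rcases y0 with a | c
    · exact absurd rfl (hy0r a)
    · exact ⟨c, rfl⟩
  have hallr : ∀ y ∈ p.support, ∃ c, y = Sum.inr c := by
    intro y hy
    have := hside y hy _ hy0
    rcases y with a | c
    · simp at this
    · exact ⟨c, rfl⟩
  -- no path vertex other than the last one lies on the cycle
  have hpathv : ∀ i : Fin n, Sum.inr (Sum.inl i) ∈ p.support → (i : ℕ) = n - 1 := by
    intro i hi
    by_contra hne
    obtain ⟨y, z, hyz, hy, hz⟩ := two_incident hp hi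
    have hno : ∀ w, s(Sum.inr (Sum.inl i), w) ∈ p.edges → False := by
      rintro (b | (j | t)) hw
      · obtain ⟨rfl, hi'⟩ := ATP_adj_inl_inrl.1 (p.adj_of_mem_edges hw).symm
        refine ATP_bridge_not_in_cycle (h0 := h0) hp ?_
        rw [Sym2.eq_swap] at hw
        rwa [show (⟨0, h0⟩ : Fin n) = i from Fin.ext (by simp only [Fin.val_mk]; omega)]
      · rcases ATP_adj_inrl_inrl.1 (p.adj_of_mem_edges hw) with hj | hj
        · exact ATP_path_edge_not_in_cycle hj hp hw
        · refine ATP_path_edge_not_in_cycle hj hp ?_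
          rwa [Sym2.eq_swap] at hw
      · obtain ⟨-, hi'⟩ := ATP_adj_inrl_inrr.1 (p.adj_of_mem_edges hw)
        exact hne hi'
    exact hno y hy
  -- find the triangle edges
  have hE : s(AV Vt n h0, TV Vt n 0) ∈ p.edges ∧ s(AV Vt n h0, TV Vt n 1) ∈ p.edges ∧
      s(TV Vt n 0, TV Vt n 1) ∈ p.edges := by
    rcases c0 with i | t
    · have hi : (i : ℕ) = n - 1 := hpathv i hy0
      have hA : AV Vt n h0 ∈ p.support := by
        rwa [show AV Vt n h0 = Sum.inr (Sum.inl i) from by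
          rw [AV]; congr 1; exact congrArg _ (Fin.ext (by simp only [Fin.val_mk]; omega))]
      obtain ⟨h1, h2⟩ := ATP_A_edges h0 hp hA
      have hT0 : Sum.inr (Sum.inr (0 : Fin 2)) ∈ p.support :=
        p.snd_mem_support_of_mem_edges h1
      obtain ⟨-, h3⟩ := ATP_T_edges h0 hp hT0
      exact ⟨h1, h2, h3⟩
    · obtain ⟨h1, h3⟩ := ATP_T_edges h0 hp hy0
      have hA : AV Vt n h0 ∈ p.support := p.snd_mem_support_of_mem_edges h1
      obtain ⟨h4, h5⟩ := ATP_A_edges h0 hp hA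
      exact ⟨h4, h5, h3⟩
  refine ⟨hallr, fun e => ⟨?_, ?_⟩⟩
  · intro he
    induction e using Sym2.ind with
    | _ w w' =>
      have hw : w ∈ p.support := p.fst_mem_support_of_mem_edges he
      have hw' : w' ∈ p.support := p.snd_mem_support_of_mem_edges he
      obtain ⟨c, rfl⟩ := hallr w hw
      obtain ⟨c', rfl⟩ := hallr w' hw'
      rcases c with i | t <;> rcases c' with i' | t'
      · exfalso
        rcases ATP_adj_inrl_inrl.1 (p.adj_of_mem_edges he) with hj | hj
        · exact ATP_path_edge_not_in_cycle hj hp he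
        · refine ATP_path_edge_not_in_cycle hj hp ?_
          rwa [Sym2.eq_swap] at he
      · have hi : (i : ℕ) = n - 1 := hpathv i hw
        have hA : Sum.inr (Sum.inl i) = AV Vt n h0 := by
          rw [AV]; congr 2; exact Fin.ext (by simp only [Fin.val_mk]; omega)
        rw [hA]
        have : t' = 0 ∨ t' = 1 := by omega
        rcases this with rfl | rfl
        · exact Or.inl rfl
        · exact Or.inr (Or.inl rfl)
      · have hi : (i' : ℕ) = n - 1 := hpathv i' hw'
        have hA : Sum.inr (Sum.inl i') = AV Vt n h0 := by
          rw [AV]; congr 2; exact Fin.ext (by simp only [Fin.val_mk]; omega)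
        rw [Sym2.eq_swap, hA]
        have : t = 0 ∨ t = 1 := by omega
        rcases this with rfl | rfl
        · exact Or.inl rfl
        · exact Or.inr (Or.inl rfl)
      · have hne : t ≠ t' := ATP_adj_inrr_inrr.1 (p.adj_of_mem_edges he)
        have : (t = 0 ∧ t' = 1) ∨ (t = 1 ∧ t' = 0) := by omega
        rcases this with ⟨rfl, rfl⟩ | ⟨rfl, rfl⟩
        · exact Or.inr (Or.inr rfl)
        · exact Or.inr (Or.inr (by rw [Sym2.eq_swap]; rfl))
  · rintro (rfl | rfl | rfl)
    · exact hE.1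
    · exact hE.2.1
    · exact hE.2.2

end ATP3
section ATP4
open SimpleGraph
variable {Vt : Type} {G : SimpleGraph Vt} {u : Vt} {n : ℕ}

lemma ATP_connected (hG : G.Connected) (h0 : 0 < n) :
    (attachTrianglePath G u n).Connected := by
  rw [connected_iff_exists_forall_reachable]
  refine ⟨Sum.inl u, ?_⟩
  have hpath : ∀ (m : ℕ) (hm : m < n),
      (attachTrianglePath G u n).Reachable (Sum.inl u) (Sum.inr (Sum.inl ⟨m, hm⟩)) := by
    intro m
    induction m with
    | zero => exact fun hm => (ATP_adj_inl_inrl.2 ⟨rfl, rfl⟩).reachable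
    | succ k ih =>
      intro hm
      exact (ih (by omega)).trans (SimpleGraph.Adj.reachable (ATP_adj_inrl_inrl.2 (Or.inl rfl)))
  rintro (a | (i | t))
  · exact SimpleGraph.Reachable.map (ATPF G u n) (hG.preconnected u a)
  · rw [show i = ⟨(i : ℕ), i.2⟩ from Fin.ext rfl]
    exact hpath i i.2
  · refine (hpath (n - 1) (Nat.sub_lt h0 one_pos)).trans (SimpleGraph.Adj.reachable ?_)
    exact ATP_adj_inrl_inrr.2 ⟨h0, rfl⟩

lemma ATP_deg (hdeg : ∀ v, (G.neighborSet v).ncard ≤ 3) (hu : (G.neighborSet u).ncard = 2) :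
    ∀ v, ((attachTrianglePath G u n).neighborSet v).ncard ≤ 3 := by
  rintro (v | (i | t))
  · by_cases hfin : (G.neighborSet v).Finite
    swap
    · have himg : (Sum.inl '' G.neighborSet v : Set (Vt ⊕ (Fin n ⊕ Fin 2))).Infinite :=
        Set.Infinite.image Sum.inl_injective.injOn hfin
      have hinf : ((attachTrianglePath G u n).neighborSet (Sum.inl v)).Infinite := by
        refine himg.mono ?_
        intro x hx
        obtain ⟨b, hb, rfl⟩ := hx
        exact ATP_adj_inl_inl.2 hb
      rw [hinf.ncard]
      omega
    · by_cases hv : v = u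
      · subst hv
        have hsub : (attachTrianglePath G v n).neighborSet (Sum.inl v) ⊆
            insert (if h : 0 < n then (Sum.inr (Sum.inl ⟨0, h⟩) : Vt ⊕ (Fin n ⊕ Fin 2))
              else Sum.inl v) (Sum.inl '' G.neighborSet v) := by
          rintro (b | (j | t)) hx
          · exact Set.mem_insert_of_mem _ ⟨b, ATP_adj_inl_inl.1 hx, rfl⟩
          · obtain ⟨-, hj⟩ := ATP_adj_inl_inrl.1 hx
            have h0 : 0 < n := j.pos
            rw [dif_pos h0]
            exact Set.mem_insert_iff.2 (Or.inl (by rw [show j = ⟨0, h0⟩ from Fin.ext hj]))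
          · exact absurd hx ATP_adj_inl_inrr
        calc ((attachTrianglePath G v n).neighborSet (Sum.inl v)).ncard
            ≤ _ := Set.ncard_le_ncard hsub ((hfin.image _).insert _)
          _ ≤ (Sum.inl '' G.neighborSet v).ncard + 1 := Set.ncard_insert_le _ _
          _ = (G.neighborSet v).ncard + 1 := by
              rw [Set.ncard_image_of_injective _ Sum.inl_injective]
          _ ≤ 3 := by rw [hu]
      · have hsub : (attachTrianglePath G u n).neighborSet (Sum.inl v) ⊆
            Sum.inl '' G.neighborSet v := by
          rintro (b | (j | t)) hx
          · exact ⟨b, ATP_adj_inl_inl.1 hx, rfl⟩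
          · exact absurd (ATP_adj_inl_inrl.1 hx).1 hv
          · exact absurd hx ATP_adj_inl_inrr
        calc ((attachTrianglePath G u n).neighborSet (Sum.inl v)).ncard
            ≤ (Sum.inl '' G.neighborSet v).ncard := Set.ncard_le_ncard hsub (hfin.image _)
          _ = (G.neighborSet v).ncard := Set.ncard_image_of_injective _ Sum.inl_injective
          _ ≤ 3 := hdeg v
  · set x1 : Vt ⊕ (Fin n ⊕ Fin 2) := if (i : ℕ) = 0 then Sum.inl u else
      Sum.inr (Sum.inl ⟨(i : ℕ) - 1, by omega⟩) with hx1
    set x2 : Vt ⊕ (Fin n ⊕ Fin 2) := if h : (i : ℕ) + 1 < n then Sum.inr (Sum.inl ⟨(i : ℕ) + 1, h⟩)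
      else Sum.inr (Sum.inr 0) with hx2
    set x3 : Vt ⊕ (Fin n ⊕ Fin 2) := Sum.inr (Sum.inr 1) with hx3
    have hsub : (attachTrianglePath G u n).neighborSet (Sum.inr (Sum.inl i)) ⊆ {x1, x2, x3} := by
      rintro (b | (j | t)) hx
      · obtain ⟨rfl, hi⟩ := ATP_adj_inl_inrl.1 hx.symm
        exact Or.inl (by rw [hx1, if_pos hi])
      · rcases ATP_adj_inrl_inrl.1 hx with hj | hj
        · have hlt : (i : ℕ) + 1 < n := by have := j.2; omega
          refine Or.inr (Or.inl ?_)
          rw [hx2, dif_pos hlt]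
          congr 2
          exact Fin.ext hj
        · refine Or.inl ?_
          rw [hx1, if_neg (by omega)]
          congr 2
          refine Fin.ext ?_
          simp only [Fin.val_mk]
          omega
      · obtain ⟨h0, hi⟩ := ATP_adj_inrl_inrr.1 hx
        have hnlt : ¬ ((i : ℕ) + 1 < n) := by omega
        have : t = 0 ∨ t = 1 := by omega
        rcases this with rfl | rfl
        · exact Or.inr (Or.inl (by rw [hx2, dif_neg hnlt]))
        · exact Or.inr (Or.inr (by rw [hx3]; exact rfl))
    calc ((attachTrianglePath G u n).neighborSet (Sum.inr (Sum.inl i))).ncard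
        ≤ ({x1, x2, x3} : Set (Vt ⊕ (Fin n ⊕ Fin 2))).ncard :=
          Set.ncard_le_ncard hsub (Set.toFinite _)
      _ ≤ 3 := by
          refine (Set.ncard_insert_le _ _).trans ?_
          have h2 : ({x2, x3} : Set (Vt ⊕ (Fin n ⊕ Fin 2))).ncard ≤ 2 :=
            (Set.ncard_insert_le _ _).trans (by simp)
          omega
  · set x1 : Vt ⊕ (Fin n ⊕ Fin 2) := if h : 0 < n then AV Vt n h else Sum.inl u with hx1
    have hsub : (attachTrianglePath G u n).neighborSet (Sum.inr (Sum.inr t)) ⊆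
        {x1, TV Vt n 0, TV Vt n 1} := by
      rintro (b | (j | t')) hx
      · exact absurd hx.symm ATP_adj_inl_inrr
      · obtain ⟨h0, hj⟩ := ATP_adj_inrl_inrr.1 hx.symm
        refine Or.inl ?_
        rw [hx1, dif_pos h0, AV]
        congr 2
        exact Fin.ext (by simp only [Fin.val_mk]; omega)
      · have : t' = 0 ∨ t' = 1 := by omega
        rcases this with rfl | rfl
        · exact Or.inr (Or.inl rfl)
        · exact Or.inr (Or.inr rfl)
    calc ((attachTrianglePath G u n).neighborSet (Sum.inr (Sum.inr t))).ncard
        ≤ _ := Set.ncard_le_ncard hsub (Set.toFinite _)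
      _ ≤ 3 := by
          refine (Set.ncard_insert_le _ _).trans ?_
          have h2 : ({TV Vt n 0, TV Vt n 1} : Set (Vt ⊕ (Fin n ⊕ Fin 2))).ncard ≤ 2 :=
            (Set.ncard_insert_le _ _).trans (by simp)
          omega

end ATP4
section ATP5
open SimpleGraph
variable {Vt : Type} {G : SimpleGraph Vt} {u : Vt} {n : ℕ}

lemma ATP_good (hG : Good G) (hu : (G.neighborSet u).ncard = 2) (h0 : 0 < n) :
    Good (attachTrianglePath G u n) := by
  classical
  have hpull : ∀ {w : Vt ⊕ (Fin n ⊕ Fin 2)} (p : (attachTrianglePath G u n).Walk w w),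
      p.IsCycle → (∀ y ∈ p.support, ∃ a, y = Sum.inl a) →
      ∃ (a : Vt) (q : G.Walk a a), q.IsCycle ∧ p.length = q.length ∧
        p.support = q.support.map (ATPF G u n) ∧
        p.edges = q.edges.map (Sym2.map (ATPF G u n)) := by
    intro w p hp hs
    obtain ⟨a, rfl⟩ := hs w p.start_mem_support
    have ha : (ATPF G u n) a = Sum.inl a := rfl
    obtain ⟨q, hq⟩ := walk_pullback (ATPF G u n) ATPF_inj (fun a b h => ATP_adj_inl_inl.1 h)
      p ha ha (fun v hv => by obtain ⟨b, rfl⟩ := hs v hv; exact ⟨b, rfl⟩)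
    refine ⟨a, q, ?_, ?_, ?_, ?_⟩
    · rw [← hq, SimpleGraph.Walk.isCycle_copy] at hp
      exact (SimpleGraph.Walk.map_isCycle_iff_of_injective ATPF_inj).1 hp
    · rw [← hq, SimpleGraph.Walk.length_copy, SimpleGraph.Walk.length_map]
    · rw [← hq, SimpleGraph.Walk.support_copy, SimpleGraph.Walk.support_map]
    · rw [← hq, SimpleGraph.Walk.edges_copy, SimpleGraph.Walk.edges_map]
  refine ⟨ATP_connected hG.1 h0, ATP_deg hG.2.1 hu, ?_, ?_⟩
  · intro w p hp
    rcases ATP_cycle_dichotomy h0 hp with hl | ⟨hr, he⟩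
    · obtain ⟨a, q, hq, hlen, -, -⟩ := hpull p hp hl
      rw [hlen]
      exact hG.2.2.1 a q hq
    · have h3 := hp.three_le_length
      have hsub : p.edges.toFinset ⊆
          ({s(AV Vt n h0, TV Vt n 0), s(AV Vt n h0, TV Vt n 1), s(TV Vt n 0, TV Vt n 1)} :
            Finset (Sym2 (Vt ⊕ (Fin n ⊕ Fin 2)))) := by
        intro e' he'
        rw [List.mem_toFinset] at he'
        rcases (he e').1 he' with rfl | rfl | rfl <;> simp
      have hlene : p.edges.length = p.edges.toFinset.card :=
        (List.toFinset_card_of_nodup hp.edges_nodup).symm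
      have hcard : p.edges.toFinset.card ≤ 3 := by
        refine (Finset.card_le_card hsub).trans ?_
        refine (Finset.card_insert_le _ _).trans ?_
        have h2 := Finset.card_insert_le (s(AV Vt n h0, TV Vt n 1))
          ({s(TV Vt n 0, TV Vt n 1)} : Finset (Sym2 (Vt ⊕ (Fin n ⊕ Fin 2))))
        simp only [Finset.card_singleton] at h2 ⊢
        omega
      have hle : p.edges.length = p.length := p.length_edges
      omega
  · intro a b p q hp hq hx e
    obtain ⟨x, hxp, hxq⟩ := hx
    rcases ATP_cycle_dichotomy h0 hp with hlp | ⟨hrp, hep⟩ <;>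
      rcases ATP_cycle_dichotomy h0 hq with hlq | ⟨hrq, heq⟩
    · obtain ⟨a', p', hp', -, hps, hpe⟩ := hpull p hp hlp
      obtain ⟨b', q', hq', -, hqs, hqe⟩ := hpull q hq hlq
      rw [hps] at hxp; rw [hqs] at hxq
      obtain ⟨x1, hx1, rfl⟩ := List.mem_map.1 hxp
      obtain ⟨x2, hx2, hx12⟩ := List.mem_map.1 hxq
      obtain rfl : x2 = x1 := ATPF_inj hx12
      have hiff := hG.2.2.2 a' b' p' q' hp' hq' ⟨x2, hx1, hx2⟩
      rw [hpe, hqe]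
      constructor
      · intro hme
        obtain ⟨e', hme', rfl⟩ := List.mem_map.1 hme
        exact List.mem_map_of_mem ((hiff e').1 hme')
      · intro hme
        obtain ⟨e', hme', rfl⟩ := List.mem_map.1 hme
        exact List.mem_map_of_mem ((hiff e').2 hme')
    · exfalso
      obtain ⟨xa, rfl⟩ := hlp x hxp
      obtain ⟨c, hc⟩ := hrq _ hxq
      exact Sum.inl_ne_inr hc
    · exfalso
      obtain ⟨xa, rfl⟩ := hlq x hxq
      obtain ⟨c, hc⟩ := hrp _ hxp
      exact Sum.inl_ne_inr hc
    · rw [hep e, heq e]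

end ATP5
theorem T_members_are_subcubic_cacti_with_disjoint_triangles
    {V : Type} (G : SimpleGraph V) (h : InT G) :
    G.Connected ∧ IsCactus G ∧
    (∀ v, (G.neighborSet v).ncard ≤ 3) ∧
    (∀ (w : V) (p : G.Walk w w), p.IsCycle → p.length = 3) ∧
    (∀ (a b : V) (p : G.Walk a a) (q : G.Walk b b), p.IsCycle → q.IsCycle →
      (∃ x, x ∈ p.support ∧ x ∈ q.support) → ∀ e, e ∈ p.edges ↔ e ∈ q.edges) := by
  have hg : Good G := by
    induction h with
    | triangle => exact good_triangle
    | iso hG e ih => exact good_iso ih e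
    | evenPath u n hG hdeg htri hpos heven ih => exact AP_good ih hdeg hpos
    | oddTrianglePath u n hG hdeg htri hodd ih => exact ATP_good ih hdeg hodd.pos
  exact ⟨hg.1, hg.isCactus, hg.2.1, hg.2.2.1, hg.2.2.2⟩
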